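/- In the island model with fitness levels, if the migration topology is the complete graph K_μ on the μ islands, then the expected parallel running time satisfies E[T_par] ≤ m + 2m/p + (2/μ) · Σ_{i=1}^{m-1} 1/s_i. -/

import Mathlib

open MeasureTheory ProbabilityTheory ENNReal


/-- `(1 - u*v)^n ≤ 1 - u*(1 - (1-v)^n)` for `u, v ∈ [0,1]`. -/
lemma aux_pow_concave (n : ℕ) : ∀ u v : ℝ, 0 ≤ u → u ≤ 1 → 0 ≤ v → v ≤ 1 →
    (1 - u * v) ^ n ≤ 1 - u * (1 - (1 - v) ^ n) := by
  induction n with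
  | zero => intro u v _ _ _ _; simp
  | succ n ih =>
    intro u v hu0 hu1 hv0 hv1
    have hA0 : (0:ℝ) ≤ (1 - v) ^ n := pow_nonneg (by linarith) n
    have hA1 : (1 - v) ^ n ≤ 1 := pow_le_one₀ (by linarith) (by linarith)
    have h1 : (1 - u * v) ^ (n + 1) = (1 - u * v) ^ n * (1 - u * v) := pow_succ _ _
    have h2 : (0:ℝ) ≤ 1 - u * v := by nlinarith
    have h3 : (1 - u * v) ^ n * (1 - u * v) ≤ (1 - u * (1 - (1 - v) ^ n)) * (1 - u * v) := by
      apply mul_le_mul_of_nonneg_right (ih u v hu0 hu1 hv0 hv1) h2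
    rw [h1]
    refine h3.trans ?_
    have hu2 : u * u ≤ u := by nlinarith
    nlinarith [mul_nonneg (mul_nonneg hu0 hv0) (sub_nonneg.2 hA1), pow_succ (1-v) n,
      mul_nonneg hv0 (sub_nonneg.2 hA1)]

/-- key inequality: `(1 - (1-x)(1-y))^n ≤ x + y^n` for `x,y ∈ [0,1]`. -/
lemma aux_key_pow (n : ℕ) (x y : ℝ) (hx0 : 0 ≤ x) (hx1 : x ≤ 1) (hy0 : 0 ≤ y) (hy1 : y ≤ 1) :
    (1 - (1 - x) * (1 - y)) ^ n ≤ x + y ^ n := by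
  have h := aux_pow_concave n (1 - x) (1 - y) (by linarith) (by linarith) (by linarith) (by linarith)
  rw [show (1:ℝ) - (1 - y) = y by ring] at h
  have hyn : (0:ℝ) ≤ y ^ n := pow_nonneg hy0 n
  have hyn1 : y ^ n ≤ 1 := pow_le_one₀ hy0 hy1
  nlinarith [h, mul_nonneg hx0 hyn]

/-- Bernoulli-type: `(1 + n*s) * (1-s)^n ≤ 1` for `s ∈ [0,1]`. -/
lemma aux_bernoulli (n : ℕ) (s : ℝ) (hs0 : 0 ≤ s) (hs1 : s ≤ 1) :
    (1 + n * s) * (1 - s) ^ n ≤ 1 := by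
  have h1 : 1 + (n:ℝ) * s ≤ (1 + s) ^ n := one_add_mul_le_pow (by linarith) n
  have h2 : ((1+s) * (1-s)) ^ n ≤ 1 := by
    apply pow_le_one₀ (by nlinarith) (by nlinarith)
  have h3 : (0:ℝ) ≤ (1 - s)^n := pow_nonneg (by linarith) n
  calc (1 + n * s) * (1 - s) ^ n ≤ (1+s)^n * (1-s)^n := by
        apply mul_le_mul_of_nonneg_right h1 h3
    _ = ((1+s)*(1-s))^n := (mul_pow _ _ _).symm
    _ ≤ 1 := h2



lemma meas_biInter_eq_prod {Ω J κ : Type*} {mΩ : MeasurableSpace Ω} {μ : Measure Ω}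
    [IsProbabilityMeasure μ]
    {m : J → MeasurableSpace Ω} (h_le : ∀ j, m j ≤ mΩ) (h_indep : iIndep m μ)
    (K : Finset κ) (S : κ → Set J)
    (hd : ∀ k ∈ K, ∀ l ∈ K, k ≠ l → Disjoint (S k) (S l))
    (E : κ → Set Ω) (hE : ∀ k ∈ K, MeasurableSet[⨆ j ∈ S k, m j] (E k)) :
    μ (⋂ k ∈ K, E k) = ∏ k ∈ K, μ (E k) := by
  classical
  induction K using Finset.induction_on with
  | empty => simp
  | @insert a K ha ih =>
    have hdisj : Disjoint (S a) (⋃ k ∈ (K : Set κ), S k) := by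
      rw [Set.disjoint_iUnion₂_right]
      intro k hk
      exact hd a (Finset.mem_insert_self a K) k (Finset.mem_insert_of_mem hk)
        (by rintro rfl; exact ha hk)
    have hind : Indep (⨆ j ∈ S a, m j) (⨆ j ∈ ⋃ k ∈ (K : Set κ), S k, m j) μ :=
      indep_iSup_of_disjoint h_le h_indep hdisj
    have hmono : ∀ k ∈ K, (⨆ j ∈ S k, m j) ≤ ⨆ j ∈ ⋃ k ∈ (K : Set κ), S k, m j := by
      intro k hk
      refine iSup₂_le fun j hj => le_iSup₂ (f := fun j (_ : j ∈ ⋃ k ∈ (K : Set κ), S k) => m j) j ?_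
      exact Set.mem_iUnion₂.2 ⟨k, hk, hj⟩
    have hKmeas : MeasurableSet[⨆ j ∈ ⋃ k ∈ (K : Set κ), S k, m j] (⋂ k ∈ K, E k) := by
      refine MeasurableSet.biInter K.countable_toSet fun k hk => ?_
      exact hmono k hk _ (hE k (Finset.mem_insert_of_mem hk))
    have heq : μ (E a ∩ ⋂ k ∈ K, E k) = μ (E a) * μ (⋂ k ∈ K, E k) :=
      (Indep_iff _ _ _).1 hind _ _ (hE a (Finset.mem_insert_self a K)) hKmeas
    rw [Finset.set_biInter_insert, heq, Finset.prod_insert ha,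
      ih (fun k hk l hl => hd k (Finset.mem_insert_of_mem hk) l (Finset.mem_insert_of_mem hl))
        (fun k hk => hE k (Finset.mem_insert_of_mem hk))]



/-- An island model with fitness levels. There are `nIslands` islands connected by the directed
migration topology `edge`, `m` fitness levels, success probabilities `s`, and a transmission
probability `p`. `X t v` is the level of island `v` at generation `t`. The model is driven by
independent Boolean random variables: `succ t v i` indicates that island `v` would create, by
its own variation, a point of level `> i` in generation `t + 1` if its level at generation `t`
is `i`; `trans t u v` indicates that transmission along the directed edge `(u, v)` succeeds in
generation `t + 1`. -/
structure IslandModel where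
  Ω : Type
  mΩ : MeasurableSpace Ω
  P : MeasureTheory.Measure Ω
  nIslands : ℕ
  m : ℕ
  edge : Fin nIslands → Fin nIslands → Prop
  s : ℕ → ℝ
  p : ℝ
  X : ℕ → Fin nIslands → Ω → ℕ
  succ : ℕ → Fin nIslands → ℕ → Ω → Bool
  trans : ℕ → Fin nIslands → Fin nIslands → Ω → Bool

namespace IslandModel

instance (M : IslandModel) : MeasurableSpace M.Ω := M.mΩ

/-- The combined family of driving Boolean random variables, indexed by the generation and
either an (island, level) pair (variation) or a directed edge (transmission). -/
def B (M : IslandModel) :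
    ℕ × (Fin M.nIslands × ℕ ⊕ Fin M.nIslands × Fin M.nIslands) → M.Ω → Bool
  | (t, Sum.inl (v, i)) => M.succ t v i
  | (t, Sum.inr (u, v)) => M.trans t u v

/-- The history σ-algebra up to generation `t`: generated by the levels of all islands up to
generation `t` together with the driving Boolean variables of the generations before `t`. -/
def hist (M : IslandModel) (t : ℕ) : MeasurableSpace M.Ω :=
  (⨆ q : {q : ℕ // q ≤ t} × Fin M.nIslands,
    MeasurableSpace.comap (M.X q.1.1 q.2) inferInstance) ⊔
  ⨆ j : {j : ℕ × (Fin M.nIslands × ℕ ⊕ Fin M.nIslands × Fin M.nIslands) // j.1 < t},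
    MeasurableSpace.comap (M.B j.1) inferInstance

/-- The σ-algebra generated by the driving Boolean variables of generations `≥ t`. -/
def future (M : IslandModel) (t : ℕ) : MeasurableSpace M.Ω :=
  ⨆ j : {j : ℕ × (Fin M.nIslands × ℕ ⊕ Fin M.nIslands × Fin M.nIslands) // t ≤ j.1},
    MeasurableSpace.comap (M.B j.1) inferInstance

/-- The defining properties of the island model: `P` is a probability measure; every island
always has a level in `{1, ..., m}` which never decreases (elitism); the driving Boolean
variables are mutually independent, and those of generations `≥ t` are independent of the
entire history up to generation `t`; each variation variable `succ t v i` succeeds with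
probability at least `s i` and forces island `v` to reach a level `> i` whenever its level is
`i < m`; each transmission variable of an edge `(u, v)` of the topology succeeds with
probability at least `p` and forces the level of `v` after generation `t + 1` to be at least
the level of `u` at generation `t`. -/
structure Valid (M : IslandModel) : Prop where
  prob : IsProbabilityMeasure M.P
  hμ : 1 ≤ M.nIslands
  hm : 1 ≤ M.m
  hs : ∀ i, 1 ≤ i → i + 1 ≤ M.m → 0 < M.s i ∧ M.s i ≤ 1
  hp0 : 0 < M.p
  hp1 : M.p ≤ 1
  hXmeas : ∀ t v, Measurable (M.X t v)
  hBmeas : ∀ j, Measurable (M.B j)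
  hXrange : ∀ t v ω, 1 ≤ M.X t v ω ∧ M.X t v ω ≤ M.m
  hXmono : ∀ t v ω, M.X t v ω ≤ M.X (t + 1) v ω
  hIndepB : ProbabilityTheory.iIndepFun M.B M.P
  hIndepHist : ∀ t, ProbabilityTheory.Indep (M.future t) (M.hist t) M.P
  hsuccProb : ∀ t v i, 1 ≤ i → i + 1 ≤ M.m →
    ENNReal.ofReal (M.s i) ≤ M.P {ω | M.succ t v i ω = true}
  htransProb : ∀ t u v, M.edge u v →
    ENNReal.ofReal M.p ≤ M.P {ω | M.trans t u v ω = true}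
  hsuccDyn : ∀ t v i ω, M.X t v ω = i → i + 1 ≤ M.m → M.succ t v i ω = true →
    i + 1 ≤ M.X (t + 1) v ω
  htransDyn : ∀ t u v ω, M.edge u v → M.trans t u v ω = true →
    M.X t u ω ≤ M.X (t + 1) v ω

/-- The parallel running time: the first generation at which some island has level `m`
(as an extended real, `∞` if this never happens). -/
noncomputable def Tpar (M : IslandModel) (ω : M.Ω) : ℝ≥0∞ :=
  ⨅ (t : ℕ) (_ : ∃ v, M.X t v ω = M.m), (t : ℝ≥0∞)

end IslandModel


namespace IslandModel
variable (M : IslandModel)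

/-- No island has reached level `i` at generation `n`. -/
def notUp (i n : ℕ) : Set M.Ω := {ω | ∀ v, M.X n v ω < i}

/-- Level `i` is first reached at generation `t0`, with least witness island `u`. -/
def hitAt (i t0 : ℕ) (u : Fin M.nIslands) : Set M.Ω :=
  {ω | (∀ q, q < t0 → ∀ v, M.X q v ω < i) ∧ i ≤ M.X t0 u ω ∧ ∀ w, w < u → M.X t0 w ω < i}

variable {M}

lemma Xmono (hM : M.Valid) {n n' : ℕ} (h : n ≤ n') (v : Fin M.nIslands) (ω : M.Ω) :
    M.X n v ω ≤ M.X n' v ω := by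
  induction n' with
  | zero =>
    have : n = 0 := by omega
    subst this; exact le_rfl
  | succ k ih =>
    rcases Nat.lt_or_ge n (k+1) with h' | h'
    · exact le_trans (ih (by omega)) (hM.hXmono k v ω)
    · have : n = k + 1 := by omega
      subst this; exact le_rfl

lemma notUp_meas (hM : M.Valid) (i n : ℕ) : MeasurableSet (notUp M i n) := by
  have : notUp M i n = ⋂ v, (M.X n v) ⁻¹' (Set.Iio i) := by
    ext ω; simp [notUp]
  rw [this]
  exact MeasurableSet.iInter fun v => (hM.hXmeas n v) measurableSet_Iio

lemma hitAt_meas (hM : M.Valid) (i t0 : ℕ) (u : Fin M.nIslands) :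
    MeasurableSet (hitAt M i t0 u) := by
  have : hitAt M i t0 u =
      (⋂ q, ⋂ (_ : q < t0), ⋂ v, (M.X q v) ⁻¹' (Set.Iio i)) ∩
      ((M.X t0 u) ⁻¹' (Set.Ici i) ∩ ⋂ w, ⋂ (_ : w < u), (M.X t0 w) ⁻¹' (Set.Iio i)) := by
    ext ω; simp [hitAt, Set.mem_iInter, and_assoc]
  rw [this]
  refine MeasurableSet.inter ?_ (MeasurableSet.inter ?_ ?_)
  · exact .iInter fun q => .iInter fun _ => .iInter fun v => (hM.hXmeas q v) measurableSet_Iio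
  · exact (hM.hXmeas t0 u) measurableSet_Ici
  · exact .iInter fun w => .iInter fun _ => (hM.hXmeas t0 w) measurableSet_Iio

/-- `hitAt` is measurable for the history σ-algebra at time `t0`. -/
lemma hitAt_meas_hist (i t0 : ℕ) (u : Fin M.nIslands) :
    MeasurableSet[M.hist t0] (hitAt M i t0 u) := by
  have key : ∀ (q : ℕ), q ≤ t0 → ∀ (v : Fin M.nIslands) (S : Set ℕ),
      MeasurableSet[M.hist t0] ((M.X q v) ⁻¹' S) := by
    intro q hq v S
    have h1 : MeasurableSpace.comap (M.X q v) inferInstance ≤ M.hist t0 := by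
      refine le_trans ?_ le_sup_left
      exact le_iSup (fun q' : {q : ℕ // q ≤ t0} × Fin M.nIslands =>
        MeasurableSpace.comap (M.X q'.1.1 q'.2) inferInstance) (⟨⟨q, hq⟩, v⟩)
    exact h1 _ ⟨S, trivial, rfl⟩
  have : hitAt M i t0 u =
      (⋂ q, ⋂ (_ : q < t0), ⋂ v, (M.X q v) ⁻¹' (Set.Iio i)) ∩
      ((M.X t0 u) ⁻¹' (Set.Ici i) ∩ ⋂ w, ⋂ (_ : w < u), (M.X t0 w) ⁻¹' (Set.Iio i)) := by
    ext ω; simp [hitAt, Set.mem_iInter, and_assoc]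
  rw [this]
  refine MeasurableSet.inter ?_ (MeasurableSet.inter ?_ ?_)
  · exact .iInter fun q => .iInter fun hq => .iInter fun v => key q (le_of_lt hq) v _
  · exact key t0 le_rfl u _
  · exact .iInter fun w => .iInter fun _ => key t0 le_rfl w _

/-- The `hitAt` events are pairwise disjoint. -/
lemma hitAt_disjoint {i : ℕ} :
    Pairwise (Function.onFun Disjoint
      (fun tu : ℕ × Fin M.nIslands => hitAt M i tu.1 tu.2)) := by
  rintro ⟨t0, u⟩ ⟨t1, w⟩ hne
  simp only [Function.onFun]
  rw [Set.disjoint_left]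
  rintro ω ⟨h1, h2, h3⟩ ⟨g1, g2, g3⟩
  rcases Nat.lt_trichotomy t0 t1 with h | h | h
  · exact absurd h2 (not_le.2 (g1 t0 h u))
  · subst h
    rcases lt_trichotomy u w with h' | h' | h'
    · exact absurd h2 (not_le.2 (g3 u h'))
    · exact hne (by simp [h'])
    · exact absurd g2 (not_le.2 (h3 w h'))
  · exact absurd g2 (not_le.2 (h1 t1 h w))

/-- If level `i` has been reached by time `n`, some `hitAt i t0 u` with `t0 ≤ n` occurred. -/
lemma hitAt_cover (i n : ℕ) :
    (notUp M i n)ᶜ ⊆ ⋃ t0 ∈ Finset.range (n+1), ⋃ u, hitAt M i t0 u := by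
  intro ω hω
  simp only [notUp, Set.mem_compl_iff, Set.mem_setOf_eq, not_forall, not_lt] at hω
  have hex : ∃ q, ∃ v : Fin M.nIslands, i ≤ M.X q v ω := by
    obtain ⟨v, hv⟩ := hω; exact ⟨n, v, hv⟩
  classical
  have hex' : ∃ q, ∃ v : Fin M.nIslands, i ≤ M.X q v ω := hex
  let t0 := Nat.find hex'
  obtain ⟨v0, hv0⟩ := Nat.find_spec hex'
  -- least witness u at time t0
  have hset : {w : Fin M.nIslands | i ≤ M.X t0 w ω}.Nonempty := ⟨v0, hv0⟩
  obtain ⟨u, hu, humin⟩ := Set.exists_min_image _ id (Set.toFinite _) hset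
  simp only [id] at humin
  have ht0n : t0 ≤ n := Nat.find_min' hex' (by obtain ⟨v, hv⟩ := hω; exact ⟨v, hv⟩)
  have hmem : ω ∈ hitAt M i t0 u := by
    refine ⟨fun q hq w => ?_, hu, fun w hw => ?_⟩
    · by_contra hcon
      push_neg at hcon
      exact absurd (Nat.find_min' hex' ⟨w, hcon⟩) (by omega)
    · by_contra hcon
      push_neg at hcon
      exact absurd (humin w hcon) (not_le.2 hw)
  simp only [Set.mem_iUnion, Finset.mem_range]
  exact ⟨t0, by omega, u, hmem⟩

/-! ### Events driven by the future randomness -/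

variable (M)

abbrev Jty := ℕ × (Fin M.nIslands × ℕ ⊕ Fin M.nIslands × Fin M.nIslands)

abbrev mB : Jty M → MeasurableSpace M.Ω := fun j => MeasurableSpace.comap (M.B j) inferInstance

def transEv (t0 : ℕ) (u v : Fin M.nIslands) (r : ℕ) : Set M.Ω :=
  {ω | M.trans (t0 + r) u v ω = true}

def succEv (i t0 : ℕ) (v : Fin M.nIslands) (r : ℕ) : Set M.Ω :=
  {ω | M.succ (t0 + r) v i ω = true}

/-- island `v` receives a transmission from `u` during `[t0, t0+a)`. -/
def spreadEv (t0 a : ℕ) (u v : Fin M.nIslands) : Set M.Ω :=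
  ⋃ r ∈ Finset.range a, transEv M t0 u v r

/-- island `v` has a variation success (at level `i`) during `[t0+a, t0+t)`. -/
def impEv (i t0 a t : ℕ) (v : Fin M.nIslands) : Set M.Ω :=
  ⋃ r ∈ Finset.Ico a t, succEv M i t0 v r

def Dev (i t0 a t : ℕ) (u v : Fin M.nIslands) : Set M.Ω :=
  (if v = u then Set.univ else spreadEv M t0 a u v) ∩ impEv M i t0 a t v

variable {M}

lemma transEv_eq (t0 : ℕ) (u v : Fin M.nIslands) (r : ℕ) :
    transEv M t0 u v r = M.B (t0 + r, Sum.inr (u, v)) ⁻¹' {true} := rfl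

lemma succEv_eq (i t0 : ℕ) (v : Fin M.nIslands) (r : ℕ) :
    succEv M i t0 v r = M.B (t0 + r, Sum.inl (v, i)) ⁻¹' {true} := rfl

lemma transEv_meas (hM : M.Valid) (t0 : ℕ) (u v : Fin M.nIslands) (r : ℕ) :
    MeasurableSet (transEv M t0 u v r) := by
  rw [transEv_eq]
  exact (hM.hBmeas _) (measurableSet_singleton true)

lemma succEv_meas (hM : M.Valid) (i t0 : ℕ) (v : Fin M.nIslands) (r : ℕ) :
    MeasurableSet (succEv M i t0 v r) := by
  rw [succEv_eq]
  exact (hM.hBmeas _) (measurableSet_singleton true)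

lemma spreadEv_meas (hM : M.Valid) (t0 a : ℕ) (u v : Fin M.nIslands) :
    MeasurableSet (spreadEv M t0 a u v) :=
  MeasurableSet.biUnion (Finset.range a).countable_toSet
    fun r _ => transEv_meas hM t0 u v r

lemma impEv_meas (hM : M.Valid) (i t0 a t : ℕ) (v : Fin M.nIslands) :
    MeasurableSet (impEv M i t0 a t v) :=
  MeasurableSet.biUnion (Finset.Ico a t).countable_toSet
    fun r _ => succEv_meas hM i t0 v r

lemma Dev_meas (hM : M.Valid) (i t0 a t : ℕ) (u v : Fin M.nIslands) :
    MeasurableSet (Dev M i t0 a t u v) := by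
  unfold Dev
  split
  · simpa using impEv_meas hM i t0 a t v
  · exact (spreadEv_meas hM t0 a u v).inter (impEv_meas hM i t0 a t v)

/-- complement of the spread event has probability at most `(1-p)^a`. -/
lemma spread_compl_prob (hM : M.Valid) (he : M.edge u v) (t0 a : ℕ) :
    M.P (spreadEv M t0 a u v)ᶜ ≤ ENNReal.ofReal ((1 - M.p) ^ a) := by
  classical
  haveI := hM.prob
  have hcompl : (spreadEv M t0 a u v)ᶜ = ⋂ r ∈ Finset.range a, (transEv M t0 u v r)ᶜ := by
    simp [spreadEv, Set.compl_iUnion]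
  have hprod : M.P (⋂ r ∈ Finset.range a, (transEv M t0 u v r)ᶜ)
      = ∏ r ∈ Finset.range a, M.P (transEv M t0 u v r)ᶜ := by
    refine meas_biInter_eq_prod (m := mB M) (fun j => (hM.hBmeas j).comap_le)
      hM.hIndepB.iIndep (Finset.range a)
      (fun r => {((t0 + r, Sum.inr (u, v)) : Jty M)}) ?_ _ ?_
    · intro k _ l _ hkl
      simp only [Set.disjoint_singleton_left, Set.mem_singleton_iff]
      intro h
      rw [Prod.mk.injEq] at h
      exact hkl (by omega)
    · intro r _
      have hle : mB M (t0 + r, Sum.inr (u, v)) ≤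
          ⨆ j ∈ ({((t0 + r, Sum.inr (u, v)) : Jty M)} : Set (Jty M)), mB M j :=
        le_iSup₂ (f := fun j (_ : j ∈ ({((t0 + r, Sum.inr (u, v)) : Jty M)} : Set (Jty M))) => mB M j)
          _ rfl
      refine hle _ ?_
      have : MeasurableSet[mB M (t0 + r, Sum.inr (u, v))] (transEv M t0 u v r) :=
        ⟨{true}, trivial, (transEv_eq t0 u v r).symm⟩
      exact this.compl
  rw [hcompl, hprod]
  have hone : ∀ r ∈ Finset.range a, M.P (transEv M t0 u v r)ᶜ ≤ ENNReal.ofReal (1 - M.p) := by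
    intro r _
    rw [prob_compl_eq_one_sub (transEv_meas hM t0 u v r)]
    have h1 : ENNReal.ofReal M.p ≤ M.P (transEv M t0 u v r) := hM.htransProb _ u v he
    calc 1 - M.P (transEv M t0 u v r) ≤ 1 - ENNReal.ofReal M.p := tsub_le_tsub_left h1 1
      _ = ENNReal.ofReal (1 - M.p) := by
          rw [ENNReal.ofReal_sub 1 hM.hp0.le, ENNReal.ofReal_one]
  calc ∏ r ∈ Finset.range a, M.P (transEv M t0 u v r)ᶜ
      ≤ ∏ _r ∈ Finset.range a, ENNReal.ofReal (1 - M.p) := Finset.prod_le_prod' hone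
    _ = ENNReal.ofReal (1 - M.p) ^ a := by rw [Finset.prod_const, Finset.card_range]
    _ = ENNReal.ofReal ((1 - M.p) ^ a) := (ENNReal.ofReal_pow (by linarith [hM.hp1]) a).symm

/-- complement of the improvement event has probability at most `(1-s i)^(t-a)`. -/
lemma imp_compl_prob (hM : M.Valid) (i : ℕ) (hi1 : 1 ≤ i) (him : i + 1 ≤ M.m)
    (t0 a t : ℕ) (v : Fin M.nIslands) :
    M.P (impEv M i t0 a t v)ᶜ ≤ ENNReal.ofReal ((1 - M.s i) ^ (t - a)) := by
  classical
  haveI := hM.prob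
  obtain ⟨hs0, hs1⟩ := hM.hs i hi1 him
  have hcompl : (impEv M i t0 a t v)ᶜ = ⋂ r ∈ Finset.Ico a t, (succEv M i t0 v r)ᶜ := by
    simp [impEv, Set.compl_iUnion]
  have hprod : M.P (⋂ r ∈ Finset.Ico a t, (succEv M i t0 v r)ᶜ)
      = ∏ r ∈ Finset.Ico a t, M.P (succEv M i t0 v r)ᶜ := by
    refine meas_biInter_eq_prod (m := mB M) (fun j => (hM.hBmeas j).comap_le)
      hM.hIndepB.iIndep (Finset.Ico a t)
      (fun r => {((t0 + r, Sum.inl (v, i)) : Jty M)}) ?_ _ ?_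
    · intro k _ l _ hkl
      simp only [Set.disjoint_singleton_left, Set.mem_singleton_iff]
      intro h
      rw [Prod.mk.injEq] at h
      exact hkl (by omega)
    · intro r _
      have hle : mB M (t0 + r, Sum.inl (v, i)) ≤
          ⨆ j ∈ ({((t0 + r, Sum.inl (v, i)) : Jty M)} : Set (Jty M)), mB M j :=
        le_iSup₂ (f := fun j (_ : j ∈ ({((t0 + r, Sum.inl (v, i)) : Jty M)} : Set (Jty M))) => mB M j)
          _ rfl
      refine hle _ ?_
      have : MeasurableSet[mB M (t0 + r, Sum.inl (v, i))] (succEv M i t0 v r) :=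
        ⟨{true}, trivial, (succEv_eq i t0 v r).symm⟩
      exact this.compl
  rw [hcompl, hprod]
  have hone : ∀ r ∈ Finset.Ico a t, M.P (succEv M i t0 v r)ᶜ ≤ ENNReal.ofReal (1 - M.s i) := by
    intro r _
    rw [prob_compl_eq_one_sub (succEv_meas hM i t0 v r)]
    have h1 : ENNReal.ofReal (M.s i) ≤ M.P (succEv M i t0 v r) := hM.hsuccProb _ v i hi1 him
    calc 1 - M.P (succEv M i t0 v r) ≤ 1 - ENNReal.ofReal (M.s i) := tsub_le_tsub_left h1 1
      _ = ENNReal.ofReal (1 - M.s i) := by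
          rw [ENNReal.ofReal_sub 1 hs0.le, ENNReal.ofReal_one]
  calc ∏ r ∈ Finset.Ico a t, M.P (succEv M i t0 v r)ᶜ
      ≤ ∏ _r ∈ Finset.Ico a t, ENNReal.ofReal (1 - M.s i) := Finset.prod_le_prod' hone
    _ = ENNReal.ofReal (1 - M.s i) ^ (t - a) := by rw [Finset.prod_const, Nat.card_Ico]
    _ = ENNReal.ofReal ((1 - M.s i) ^ (t - a)) := (ENNReal.ofReal_pow (by linarith) _).symm

/-- Probability bound for the complement of a single island's `Dev` event. -/
lemma Dev_compl_prob (hM : M.Valid) (hedge : ∀ u v : Fin M.nIslands, M.edge u v ↔ u ≠ v)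
    (i : ℕ) (hi1 : 1 ≤ i) (him : i + 1 ≤ M.m) (t0 a t : ℕ) (u v : Fin M.nIslands) :
    M.P (Dev M i t0 a t u v)ᶜ ≤
      ENNReal.ofReal (1 - (1 - (1 - M.p) ^ a) * (1 - (1 - M.s i) ^ (t - a))) := by
  classical
  haveI := hM.prob
  obtain ⟨hs0, hs1⟩ := hM.hs i hi1 him
  have hp0 := hM.hp0; have hp1 := hM.hp1
  set qa : ℝ := (1 - M.p) ^ a with hqa
  set sb : ℝ := (1 - M.s i) ^ (t - a) with hsb
  have hqa0 : 0 ≤ qa := pow_nonneg (by linarith) _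
  have hqa1 : qa ≤ 1 := pow_le_one₀ (by linarith) (by linarith)
  have hsb0 : 0 ≤ sb := pow_nonneg (by linarith) _
  have hsb1 : sb ≤ 1 := pow_le_one₀ (by linarith) (by linarith)
  by_cases hvu : v = u
  · have hde : Dev M i t0 a t u v = impEv M i t0 a t v := by simp [Dev, hvu]
    rw [hde]
    refine le_trans (imp_compl_prob hM i hi1 him t0 a t v) ?_
    apply ENNReal.ofReal_le_ofReal
    nlinarith
  · have he : M.edge u v := (hedge u v).2 (fun h => hvu h.symm)
    have hDev : Dev M i t0 a t u v = spreadEv M t0 a u v ∩ impEv M i t0 a t v := by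
      simp [Dev, hvu]
    have hind : Indep (⨆ j ∈ {j : Jty M | j.2 = Sum.inr (u, v)}, mB M j)
        (⨆ j ∈ {j : Jty M | j.2 = Sum.inl (v, i)}, mB M j) M.P := by
      refine indep_iSup_of_disjoint (fun j => (hM.hBmeas j).comap_le) hM.hIndepB.iIndep ?_
      rw [Set.disjoint_left]
      rintro j hj1 hj2
      simp only [Set.mem_setOf_eq] at hj1 hj2
      rw [hj1] at hj2; exact absurd hj2 (by simp)
    have hspread_m : MeasurableSet[⨆ j ∈ {j : Jty M | j.2 = Sum.inr (u, v)}, mB M j]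
        (spreadEv M t0 a u v) := by
      refine MeasurableSet.biUnion (Finset.range a).countable_toSet fun r _ => ?_
      have hle : mB M (t0 + r, Sum.inr (u, v)) ≤
          ⨆ j ∈ {j : Jty M | j.2 = Sum.inr (u, v)}, mB M j :=
        le_iSup₂ (f := fun j (_ : j ∈ {j : Jty M | j.2 = Sum.inr (u, v)}) => mB M j) _ rfl
      exact hle _ ⟨{true}, trivial, (transEv_eq t0 u v r).symm⟩
    have himp_m : MeasurableSet[⨆ j ∈ {j : Jty M | j.2 = Sum.inl (v, i)}, mB M j]
        (impEv M i t0 a t v) := by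
      refine MeasurableSet.biUnion (Finset.Ico a t).countable_toSet fun r _ => ?_
      have hle : mB M (t0 + r, Sum.inl (v, i)) ≤
          ⨆ j ∈ {j : Jty M | j.2 = Sum.inl (v, i)}, mB M j :=
        le_iSup₂ (f := fun j (_ : j ∈ {j : Jty M | j.2 = Sum.inl (v, i)}) => mB M j) _ rfl
      exact hle _ ⟨{true}, trivial, (succEv_eq i t0 v r).symm⟩
    have hmul : M.P (spreadEv M t0 a u v ∩ impEv M i t0 a t v)
        = M.P (spreadEv M t0 a u v) * M.P (impEv M i t0 a t v) :=
      (Indep_iff _ _ _).1 hind _ _ hspread_m himp_m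
    have h1 : ENNReal.ofReal (1 - qa) ≤ M.P (spreadEv M t0 a u v) := by
      have h2 : M.P (spreadEv M t0 a u v) = 1 - M.P (spreadEv M t0 a u v)ᶜ := by
        rw [prob_compl_eq_one_sub (spreadEv_meas hM t0 a u v),
          ENNReal.sub_sub_cancel ENNReal.one_ne_top prob_le_one]
      rw [h2]
      calc ENNReal.ofReal (1 - qa) = 1 - ENNReal.ofReal qa := by
            rw [ENNReal.ofReal_sub 1 hqa0, ENNReal.ofReal_one]
        _ ≤ 1 - M.P (spreadEv M t0 a u v)ᶜ := tsub_le_tsub_left (spread_compl_prob hM he t0 a) 1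
    have h2 : ENNReal.ofReal (1 - sb) ≤ M.P (impEv M i t0 a t v) := by
      have h3 : M.P (impEv M i t0 a t v) = 1 - M.P (impEv M i t0 a t v)ᶜ := by
        rw [prob_compl_eq_one_sub (impEv_meas hM i t0 a t v),
          ENNReal.sub_sub_cancel ENNReal.one_ne_top prob_le_one]
      rw [h3]
      calc ENNReal.ofReal (1 - sb) = 1 - ENNReal.ofReal sb := by
            rw [ENNReal.ofReal_sub 1 hsb0, ENNReal.ofReal_one]
        _ ≤ 1 - M.P (impEv M i t0 a t v)ᶜ :=
            tsub_le_tsub_left (imp_compl_prob hM i hi1 him t0 a t v) 1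
    have hD : ENNReal.ofReal ((1 - qa) * (1 - sb)) ≤ M.P (Dev M i t0 a t u v) := by
      rw [hDev, hmul, ENNReal.ofReal_mul (by linarith)]
      exact mul_le_mul' h1 h2
    rw [prob_compl_eq_one_sub (Dev_meas hM i t0 a t u v)]
    calc 1 - M.P (Dev M i t0 a t u v) ≤ 1 - ENNReal.ofReal ((1 - qa) * (1 - sb)) :=
          tsub_le_tsub_left hD 1
      _ = ENNReal.ofReal (1 - (1 - qa) * (1 - sb)) := by
          rw [ENNReal.ofReal_sub 1 (by nlinarith), ENNReal.ofReal_one]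

variable (M) in
/-- The random coordinates used by island `v`'s `Dev` event. -/
def islandSet (i t0 : ℕ) (u v : Fin M.nIslands) : Set (Jty M) :=
  {j | t0 ≤ j.1 ∧ (j.2 = Sum.inr (u, v) ∨ j.2 = Sum.inl (v, i))}

lemma allDev_eq_prod (hM : M.Valid) (i t0 a t : ℕ) (u : Fin M.nIslands) :
    M.P (⋂ v, (Dev M i t0 a t u v)ᶜ) = ∏ v, M.P (Dev M i t0 a t u v)ᶜ := by
  classical
  haveI := hM.prob
  have hmeas : ∀ v : Fin M.nIslands, v ∈ Finset.univ →
      MeasurableSet[⨆ j ∈ islandSet M i t0 u v, mB M j] (Dev M i t0 a t u v)ᶜ := by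
    intro v _
    have hkey : ∀ (j : Jty M), j ∈ islandSet M i t0 u v → ∀ S : Set Bool,
        MeasurableSet[⨆ j ∈ islandSet M i t0 u v, mB M j] (M.B j ⁻¹' S) := by
      intro j hj S
      have hle : mB M j ≤ ⨆ j ∈ islandSet M i t0 u v, mB M j :=
        le_iSup₂ (f := fun j (_ : j ∈ islandSet M i t0 u v) => mB M j) _ hj
      exact hle _ ⟨S, trivial, rfl⟩
    refine MeasurableSet.compl ?_
    refine MeasurableSet.inter ?_ ?_
    · split
      · exact MeasurableSet.univ
      · refine MeasurableSet.biUnion (Finset.range a).countable_toSet fun r _ => ?_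
        rw [transEv_eq]
        exact hkey _ ⟨by simp, Or.inl rfl⟩ _
    · refine MeasurableSet.biUnion (Finset.Ico a t).countable_toSet fun r _ => ?_
      rw [succEv_eq]
      exact hkey _ ⟨by simp, Or.inr rfl⟩ _
  have hdisj : ∀ k ∈ Finset.univ, ∀ l ∈ Finset.univ, k ≠ l →
      Disjoint (islandSet M i t0 u k) (islandSet M i t0 u l) := by
    intro k _ l _ hkl
    rw [Set.disjoint_left]
    rintro j ⟨_, h1 | h1⟩ ⟨_, h2 | h2⟩ <;> rw [h1] at h2 <;> simp_all
  have h := meas_biInter_eq_prod (m := mB M) (fun j => (hM.hBmeas j).comap_le)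
    hM.hIndepB.iIndep Finset.univ (islandSet M i t0 u) hdisj
    (fun v => (Dev M i t0 a t u v)ᶜ) hmeas
  simpa using h

lemma allDev_future_meas (i t0 a t : ℕ) (u : Fin M.nIslands) :
    MeasurableSet[M.future t0] (⋂ v, (Dev M i t0 a t u v)ᶜ) := by
  have hkey : ∀ (j : Jty M), t0 ≤ j.1 → ∀ S : Set Bool,
      MeasurableSet[M.future t0] (M.B j ⁻¹' S) := by
    intro j hj S
    have hle : MeasurableSpace.comap (M.B j) inferInstance ≤ M.future t0 :=
      le_iSup (fun j' : {j' : Jty M // t0 ≤ j'.1} =>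
        MeasurableSpace.comap (M.B j'.1) inferInstance) ⟨j, hj⟩
    exact hle _ ⟨S, trivial, rfl⟩
  refine MeasurableSet.iInter fun v => MeasurableSet.compl (MeasurableSet.inter ?_ ?_)
  · split
    · exact MeasurableSet.univ
    · refine MeasurableSet.biUnion (Finset.range a).countable_toSet fun r _ => ?_
      rw [transEv_eq]
      exact hkey _ (by simp) _
  · refine MeasurableSet.biUnion (Finset.Ico a t).countable_toSet fun r _ => ?_
    rw [succEv_eq]
    exact hkey _ (by simp) _

/-- Dynamics: if level `i` was first hit at `t0` by `u` and level `i+1` is still not reached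
at time `t0 + t`, then no island's `Dev` event can have occurred. -/
lemma key_incl (hM : M.Valid) (hedge : ∀ u v : Fin M.nIslands, M.edge u v ↔ u ≠ v)
    (i t0 t : ℕ) (u : Fin M.nIslands) (him : i + 1 ≤ M.m) :
    hitAt M i t0 u ∩ notUp M (i+1) (t0+t) ⊆ ⋂ v, (Dev M i t0 (t/2) t u v)ᶜ := by
  rintro ω ⟨⟨hprev, hu, hleast⟩, hnot⟩
  have hbound : ∀ n, n ≤ t0 + t → ∀ w, M.X n w ω ≤ i := by
    intro n hn w
    have h1 : M.X n w ω ≤ M.X (t0+t) w ω := Xmono hM hn w ω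
    have h2 : M.X (t0+t) w ω < i + 1 := hnot w
    omega
  refine Set.mem_iInter.2 fun v => ?_
  intro hDev
  obtain ⟨hA, hB⟩ := hDev
  simp only [impEv, Set.mem_iUnion, Finset.mem_Ico] at hB
  obtain ⟨r, ⟨har, hrt⟩, hsucc⟩ := hB
  have hinform : i ≤ M.X (t0 + t/2) v ω := by
    by_cases hvu : v = u
    · subst hvu
      exact le_trans hu (Xmono hM (Nat.le_add_right _ _) v ω)
    · have hA' : ω ∈ spreadEv M t0 (t/2) u v := by
        have := hA
        rwa [if_neg hvu] at this
      simp only [spreadEv, Set.mem_iUnion, Finset.mem_range] at hA'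
      obtain ⟨r', hr', htrans⟩ := hA'
      have h1 : i ≤ M.X (t0 + r') u ω := le_trans hu (Xmono hM (Nat.le_add_right _ _) u ω)
      have h2 : M.X (t0 + r') u ω ≤ M.X (t0 + r' + 1) v ω :=
        hM.htransDyn (t0 + r') u v ω ((hedge u v).2 (fun h => hvu h.symm)) htrans
      exact le_trans (le_trans h1 h2) (Xmono hM (by omega) v ω)
  have hge : i ≤ M.X (t0 + r) v ω :=
    le_trans hinform (Xmono hM (by omega) v ω)
  have hle' : M.X (t0 + r) v ω ≤ i := hbound _ (by omega) v
  have hdyn := hM.hsuccDyn (t0 + r) v i ω (le_antisymm hle' hge) him hsucc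
  have hcontr := hbound (t0 + r + 1) (by omega) v
  omega

/-- The key estimate. -/
lemma key_est (hM : M.Valid) (hedge : ∀ u v : Fin M.nIslands, M.edge u v ↔ u ≠ v)
    (i t0 t : ℕ) (u : Fin M.nIslands) (hi1 : 1 ≤ i) (him : i + 1 ≤ M.m) :
    M.P (hitAt M i t0 u ∩ notUp M (i+1) (t0+t)) ≤
      M.P (hitAt M i t0 u) *
        (ENNReal.ofReal ((1 - M.p) ^ (t/2)) +
          ENNReal.ofReal ((1 - M.s i) ^ ((t - t/2) * M.nIslands))) := by
  classical
  haveI := hM.prob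
  obtain ⟨hs0, hs1⟩ := hM.hs i hi1 him
  have hp0 := hM.hp0; have hp1 := hM.hp1
  set qa : ℝ := (1 - M.p) ^ (t/2) with hqa
  set sb : ℝ := (1 - M.s i) ^ (t - t/2) with hsb
  have hqa0 : 0 ≤ qa := pow_nonneg (by linarith) _
  have hqa1 : qa ≤ 1 := pow_le_one₀ (by linarith) (by linarith)
  have hsb0 : 0 ≤ sb := pow_nonneg (by linarith) _
  have hsb1 : sb ≤ 1 := pow_le_one₀ (by linarith) (by linarith)
  have hcb : (0:ℝ) ≤ 1 - (1 - qa) * (1 - sb) := by nlinarith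
  have hDbound : M.P (⋂ v, (Dev M i t0 (t/2) t u v)ᶜ) ≤
      ENNReal.ofReal qa + ENNReal.ofReal ((1 - M.s i) ^ ((t - t/2) * M.nIslands)) := by
    rw [allDev_eq_prod hM i t0 (t/2) t u]
    calc ∏ v, M.P (Dev M i t0 (t/2) t u v)ᶜ
        ≤ ∏ _v : Fin M.nIslands, ENNReal.ofReal (1 - (1 - qa) * (1 - sb)) :=
          Finset.prod_le_prod' fun v _ => Dev_compl_prob hM hedge i hi1 him t0 (t/2) t u v
      _ = ENNReal.ofReal (1 - (1 - qa) * (1 - sb)) ^ M.nIslands := by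
          rw [Finset.prod_const, Finset.card_univ, Fintype.card_fin]
      _ = ENNReal.ofReal ((1 - (1 - qa) * (1 - sb)) ^ M.nIslands) :=
          (ENNReal.ofReal_pow hcb _).symm
      _ ≤ ENNReal.ofReal (qa + sb ^ M.nIslands) :=
          ENNReal.ofReal_le_ofReal (aux_key_pow _ qa sb hqa0 hqa1 hsb0 hsb1)
      _ = ENNReal.ofReal qa + ENNReal.ofReal (sb ^ M.nIslands) :=
          ENNReal.ofReal_add hqa0 (pow_nonneg hsb0 _)
      _ = ENNReal.ofReal qa + ENNReal.ofReal ((1 - M.s i) ^ ((t - t/2) * M.nIslands)) := by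
          rw [hsb, ← pow_mul]
  calc M.P (hitAt M i t0 u ∩ notUp M (i+1) (t0+t))
      ≤ M.P ((⋂ v, (Dev M i t0 (t/2) t u v)ᶜ) ∩ hitAt M i t0 u) := by
        refine measure_mono fun ω hω => ⟨key_incl hM hedge i t0 t u him hω, hω.1⟩
    _ = M.P (⋂ v, (Dev M i t0 (t/2) t u v)ᶜ) * M.P (hitAt M i t0 u) :=
        (Indep_iff _ _ _).1 (hM.hIndepHist t0) _ _
          (allDev_future_meas i t0 (t/2) t u) (hitAt_meas_hist i t0 u)
    _ = M.P (hitAt M i t0 u) * M.P (⋂ v, (Dev M i t0 (t/2) t u v)ᶜ) := mul_comm _ _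
    _ ≤ _ := mul_le_mul_right hDbound _

/-- Reindexing a triangular double sum. -/
lemma tsum_shift_eq (f : ℕ → ℕ → ℝ≥0∞) :
    (∑' n : ℕ, ∑ t0 ∈ Finset.range (n+1), f t0 n) = ∑' t0 : ℕ, ∑' t : ℕ, f t0 (t0 + t) := by
  classical
  have h1 : ∀ n : ℕ, ∑ t0 ∈ Finset.range (n+1), f t0 n
      = ∑' t0 : ℕ, (if t0 ≤ n then f t0 n else 0) := by
    intro n
    rw [tsum_eq_sum (s := Finset.range (n+1)) ?_]
    · exact Finset.sum_congr rfl fun t0 ht0 => by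
        rw [if_pos (by simpa [Nat.lt_succ_iff] using ht0)]
    · intro b hb
      rw [if_neg (by simpa [Nat.lt_succ_iff] using hb)]
  calc (∑' n : ℕ, ∑ t0 ∈ Finset.range (n+1), f t0 n)
      = ∑' (n : ℕ) (t0 : ℕ), (if t0 ≤ n then f t0 n else 0) := by
        exact tsum_congr h1
    _ = ∑' (t0 : ℕ) (n : ℕ), (if t0 ≤ n then f t0 n else 0) := ENNReal.tsum_comm
    _ = ∑' (t0 : ℕ) (t : ℕ), f t0 (t0 + t) := by
        refine tsum_congr fun t0 => ?_
        have hinj : Function.Injective (fun t : ℕ => t0 + t) := fun x y h => by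
          simpa using h
        have hsupp : Function.support (fun n : ℕ => if t0 ≤ n then f t0 n else 0)
            ⊆ Set.range (fun t : ℕ => t0 + t) := by
          intro n hn
          by_cases h : t0 ≤ n
          · exact ⟨n - t0, by simp; omega⟩
          · simp [if_neg h] at hn
        rw [← Function.Injective.tsum_eq hinj hsupp]
        refine tsum_congr fun t => ?_
        simp [Nat.le_add_right]

lemma tsum_hitAt_le_one (hM : M.Valid) (i : ℕ) :
    (∑' t0 : ℕ, ∑ u, M.P (hitAt M i t0 u)) ≤ 1 := by
  haveI := hM.prob
  have h1 : (∑' t0 : ℕ, ∑ u, M.P (hitAt M i t0 u))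
      = ∑' tu : ℕ × Fin M.nIslands, M.P (hitAt M i tu.1 tu.2) := by
    rw [ENNReal.tsum_prod']
    exact tsum_congr fun t0 => (tsum_fintype _).symm
  rw [h1, ← measure_iUnion hitAt_disjoint (fun tu => hitAt_meas hM i tu.1 tu.2)]
  exact prob_le_one

/-- The per-level sum of tail bounds. -/
lemma tsum_fterm_le (hM : M.Valid) (i : ℕ) (hi1 : 1 ≤ i) (him : i + 1 ≤ M.m) :
    (∑' t : ℕ, (ENNReal.ofReal ((1 - M.p) ^ (t/2)) +
        ENNReal.ofReal ((1 - M.s i) ^ ((t - t/2) * M.nIslands))))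
      ≤ ENNReal.ofReal (1 + 2/M.p + 2/(M.nIslands * M.s i)) := by
  obtain ⟨hs0, hs1⟩ := hM.hs i hi1 him
  have hp0 := hM.hp0; have hp1 := hM.hp1
  have hμ1 : 1 ≤ M.nIslands := hM.hμ
  set σ : ℝ := 1 - M.s i with hσ
  have hσ0 : 0 ≤ σ := by linarith
  have hσ1 : σ < 1 := by simp only [hσ]; linarith
  set Q : ℝ≥0∞ := ENNReal.ofReal (1 - M.p) with hQ
  set R : ℝ≥0∞ := ENNReal.ofReal (σ ^ M.nIslands) with hR
  -- part A : ∑ Q^(t/2) = 2 * (ofReal p)⁻¹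
  have hA : (∑' t : ℕ, ENNReal.ofReal ((1 - M.p) ^ (t/2)))
      = ENNReal.ofReal M.p⁻¹ + ENNReal.ofReal M.p⁻¹ := by
    have hterm : ∀ t : ℕ, ENNReal.ofReal ((1 - M.p) ^ (t/2)) = Q ^ (t/2) := fun t =>
      ENNReal.ofReal_pow (by linarith) _
    have heo := tsum_even_add_odd (f := fun t : ℕ => Q ^ (t/2))
      ENNReal.summable ENNReal.summable
    have he : ∀ k : ℕ, (2 * k) / 2 = k := fun k => by omega
    have ho : ∀ k : ℕ, (2 * k + 1) / 2 = k := fun k => by omega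
    have hgeo : (∑' k : ℕ, Q ^ k) = (1 - Q)⁻¹ := ENNReal.tsum_geometric Q
    have hQp : 1 - Q = ENNReal.ofReal M.p := by
      rw [hQ, ← ENNReal.ofReal_one, ← ENNReal.ofReal_sub 1 (by linarith)]
      norm_num
    have hinv : (1 - Q)⁻¹ = ENNReal.ofReal M.p⁻¹ := by
      rw [hQp, ENNReal.ofReal_inv_of_pos hp0]
    calc (∑' t : ℕ, ENNReal.ofReal ((1 - M.p) ^ (t/2))) = ∑' t : ℕ, Q ^ (t/2) :=
          tsum_congr hterm
      _ = (∑' k : ℕ, Q ^ ((2*k)/2)) + ∑' k : ℕ, Q ^ ((2*k+1)/2) := heo.symm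
      _ = (∑' k : ℕ, Q ^ k) + ∑' k : ℕ, Q ^ k := by simp only [he, ho]
      _ = ENNReal.ofReal M.p⁻¹ + ENNReal.ofReal M.p⁻¹ := by rw [hgeo, hinv]
  -- part B
  have hσμ1 : σ ^ M.nIslands < 1 := pow_lt_one₀ hσ0 hσ1 (by omega)
  have hσμ0 : 0 ≤ σ ^ M.nIslands := pow_nonneg hσ0 _
  have hB : (∑' t : ℕ, ENNReal.ofReal (σ ^ ((t - t/2) * M.nIslands)))
      = (1 - R)⁻¹ + R * (1 - R)⁻¹ := by
    have hterm : ∀ t : ℕ, ENNReal.ofReal (σ ^ ((t - t/2) * M.nIslands)) = R ^ (t - t/2) := by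
      intro t
      rw [hR, ← ENNReal.ofReal_pow hσμ0, ← pow_mul, Nat.mul_comm]
    have heo := tsum_even_add_odd (f := fun t : ℕ => R ^ (t - t/2))
      ENNReal.summable ENNReal.summable
    have he : ∀ k : ℕ, (2 * k) - (2 * k) / 2 = k := fun k => by omega
    have ho : ∀ k : ℕ, (2 * k + 1) - (2 * k + 1) / 2 = k + 1 := fun k => by omega
    calc (∑' t : ℕ, ENNReal.ofReal (σ ^ ((t - t/2) * M.nIslands)))
        = ∑' t : ℕ, R ^ (t - t/2) := tsum_congr hterm
      _ = (∑' k : ℕ, R ^ ((2*k) - (2*k)/2)) + ∑' k : ℕ, R ^ ((2*k+1) - (2*k+1)/2) := heo.symm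
      _ = (∑' k : ℕ, R ^ k) + ∑' k : ℕ, R ^ (k+1) := by simp only [he, ho]
      _ = (1 - R)⁻¹ + R * (1 - R)⁻¹ := by
          rw [ENNReal.tsum_geometric]
          congr 1
          calc (∑' k : ℕ, R ^ (k+1)) = ∑' k : ℕ, R * R ^ k := by
                exact tsum_congr fun k => by rw [pow_succ, mul_comm]
            _ = R * ∑' k : ℕ, R ^ k := ENNReal.tsum_mul_left
            _ = R * (1 - R)⁻¹ := by rw [ENNReal.tsum_geometric]
  -- real bounds for part B
  set A : ℝ := 1 - σ ^ M.nIslands with hA'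
  have hApos : 0 < A := by simp only [hA']; linarith
  set Bv : ℝ := (M.nIslands : ℝ) * M.s i with hBv
  have hBpos : 0 < Bv := by
    apply mul_pos _ hs0
    exact_mod_cast Nat.lt_of_lt_of_le Nat.zero_lt_one hμ1
  have hbern : (1 + Bv) * σ ^ M.nIslands ≤ 1 := by
    have := aux_bernoulli M.nIslands (M.s i) hs0.le hs1
    simpa [hBv, hσ] using this
  have h1R : 1 - R = ENNReal.ofReal A := by
    rw [hR, hA', ← ENNReal.ofReal_one, ← ENNReal.ofReal_sub 1 hσμ0]
  have hinvR : (1 - R)⁻¹ = ENNReal.ofReal A⁻¹ := by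
    rw [h1R, ENNReal.ofReal_inv_of_pos hApos]
  have hreal1 : A⁻¹ ≤ 1 + Bv⁻¹ := by
    have h2 : Bv ≤ A * (1 + Bv) := by nlinarith
    have h4 : 1 ≤ A * (1 + Bv⁻¹) := by
      have h3 := mul_le_mul_of_nonneg_right h2 (le_of_lt (inv_pos.2 hBpos))
      rw [mul_inv_cancel₀ hBpos.ne'] at h3
      calc (1:ℝ) ≤ A * (1 + Bv) * Bv⁻¹ := h3
        _ = A * (Bv⁻¹ + Bv * Bv⁻¹) := by ring
        _ = A * (Bv⁻¹ + 1) := by rw [mul_inv_cancel₀ hBpos.ne']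
        _ = A * (1 + Bv⁻¹) := by ring
    calc A⁻¹ = A⁻¹ * 1 := (mul_one _).symm
      _ ≤ A⁻¹ * (A * (1 + Bv⁻¹)) := mul_le_mul_of_nonneg_left h4 (inv_pos.2 hApos).le
      _ = (A⁻¹ * A) * (1 + Bv⁻¹) := by ring
      _ = 1 + Bv⁻¹ := by rw [inv_mul_cancel₀ hApos.ne']; ring
  have h5 : Bv * σ ^ M.nIslands ≤ A := by nlinarith
  have hreal2 : σ ^ M.nIslands * A⁻¹ ≤ Bv⁻¹ := by
    have h6 := mul_le_mul_of_nonneg_right h5 (le_of_lt (inv_pos.2 hApos))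
    rw [mul_inv_cancel₀ hApos.ne'] at h6
    have h7 := mul_le_mul_of_nonneg_left h6 (le_of_lt (inv_pos.2 hBpos))
    calc σ ^ M.nIslands * A⁻¹ = (Bv⁻¹ * Bv) * (σ ^ M.nIslands * A⁻¹) := by
          rw [inv_mul_cancel₀ hBpos.ne', one_mul]
      _ = Bv⁻¹ * (Bv * σ ^ M.nIslands * A⁻¹) := by ring
      _ ≤ Bv⁻¹ * 1 := h7
      _ = Bv⁻¹ := mul_one _
  have hbd1 : (1 - R)⁻¹ ≤ ENNReal.ofReal (1 + Bv⁻¹) := by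
    rw [hinvR]; exact ENNReal.ofReal_le_ofReal hreal1
  have hbd2 : R * (1 - R)⁻¹ ≤ ENNReal.ofReal Bv⁻¹ := by
    rw [hinvR, hR, ← ENNReal.ofReal_mul hσμ0]
    exact ENNReal.ofReal_le_ofReal hreal2
  have hpinv : (0:ℝ) ≤ M.p⁻¹ := (inv_pos.2 hp0).le
  have hBinv : (0:ℝ) ≤ Bv⁻¹ := (inv_pos.2 hBpos).le
  calc (∑' t : ℕ, (ENNReal.ofReal ((1 - M.p) ^ (t/2)) +
        ENNReal.ofReal ((1 - M.s i) ^ ((t - t/2) * M.nIslands))))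
      = (∑' t : ℕ, ENNReal.ofReal ((1 - M.p) ^ (t/2)))
        + ∑' t : ℕ, ENNReal.ofReal (σ ^ ((t - t/2) * M.nIslands)) := ENNReal.tsum_add
    _ = (ENNReal.ofReal M.p⁻¹ + ENNReal.ofReal M.p⁻¹) + ((1 - R)⁻¹ + R * (1 - R)⁻¹) := by
        rw [hA, hB]
    _ ≤ (ENNReal.ofReal M.p⁻¹ + ENNReal.ofReal M.p⁻¹)
        + (ENNReal.ofReal (1 + Bv⁻¹) + ENNReal.ofReal Bv⁻¹) :=
        add_le_add le_rfl (add_le_add hbd1 hbd2)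
    _ = ENNReal.ofReal (M.p⁻¹ + M.p⁻¹ + ((1 + Bv⁻¹) + Bv⁻¹)) := by
        rw [← ENNReal.ofReal_add hpinv hpinv,
          ← ENNReal.ofReal_add (by linarith : (0:ℝ) ≤ 1 + Bv⁻¹) hBinv,
          ← ENNReal.ofReal_add (by linarith : (0:ℝ) ≤ M.p⁻¹ + M.p⁻¹) (by linarith)]
    _ = ENNReal.ofReal (1 + 2/M.p + 2/(M.nIslands * M.s i)) := by
        congr 1
        rw [hBv, div_eq_mul_inv, div_eq_mul_inv]
        ring

/-- One level of the recursion. -/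
lemma level_step (hM : M.Valid) (hedge : ∀ u v : Fin M.nIslands, M.edge u v ↔ u ≠ v)
    (i : ℕ) (hi1 : 1 ≤ i) (him : i + 1 ≤ M.m) :
    (∑' n : ℕ, M.P (notUp M (i+1) n)) ≤ (∑' n : ℕ, M.P (notUp M i n))
      + ENNReal.ofReal (1 + 2/M.p + 2/(M.nIslands * M.s i)) := by
  classical
  haveI := hM.prob
  have hn : ∀ n : ℕ, M.P (notUp M (i+1) n) ≤ M.P (notUp M i n)
      + ∑ t0 ∈ Finset.range (n+1), ∑ u, M.P (hitAt M i t0 u ∩ notUp M (i+1) n) := by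
    intro n
    have hsplit : notUp M (i+1) n ⊆ notUp M i n ∪
        ⋃ t0 ∈ Finset.range (n+1), ⋃ u, (hitAt M i t0 u ∩ notUp M (i+1) n) := by
      intro ω hω
      by_cases h : ω ∈ notUp M i n
      · exact Or.inl h
      · right
        have hc := hitAt_cover (M := M) i n h
        simp only [Set.mem_iUnion] at hc ⊢
        obtain ⟨t0, ht0, u, hu⟩ := hc
        exact ⟨t0, ht0, u, hu, hω⟩
    calc M.P (notUp M (i+1) n)
        ≤ M.P (notUp M i n ∪ ⋃ t0 ∈ Finset.range (n+1), ⋃ u,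
            (hitAt M i t0 u ∩ notUp M (i+1) n)) := measure_mono hsplit
      _ ≤ M.P (notUp M i n) + M.P (⋃ t0 ∈ Finset.range (n+1), ⋃ u,
            (hitAt M i t0 u ∩ notUp M (i+1) n)) := measure_union_le _ _
      _ ≤ M.P (notUp M i n) + ∑ t0 ∈ Finset.range (n+1), M.P (⋃ u,
            (hitAt M i t0 u ∩ notUp M (i+1) n)) := by
          gcongr
          exact measure_biUnion_finset_le _ _
      _ ≤ M.P (notUp M i n) + ∑ t0 ∈ Finset.range (n+1), ∑ u,
            M.P (hitAt M i t0 u ∩ notUp M (i+1) n) := by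
          gcongr with t0 _
          exact measure_iUnion_fintype_le _ _
  have hinner : (∑' n : ℕ, ∑ t0 ∈ Finset.range (n+1), ∑ u,
      M.P (hitAt M i t0 u ∩ notUp M (i+1) n))
      ≤ ENNReal.ofReal (1 + 2/M.p + 2/(M.nIslands * M.s i)) := by
    rw [tsum_shift_eq (fun t0 n => ∑ u, M.P (hitAt M i t0 u ∩ notUp M (i+1) n))]
    set C : ℝ≥0∞ := ∑' t : ℕ, (ENNReal.ofReal ((1 - M.p) ^ (t/2)) +
        ENNReal.ofReal ((1 - M.s i) ^ ((t - t/2) * M.nIslands))) with hC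
    have hstep : ∀ t0 : ℕ, (∑' t : ℕ, ∑ u, M.P (hitAt M i t0 u ∩ notUp M (i+1) (t0 + t)))
        ≤ (∑ u, M.P (hitAt M i t0 u)) * C := by
      intro t0
      calc (∑' t : ℕ, ∑ u, M.P (hitAt M i t0 u ∩ notUp M (i+1) (t0 + t)))
          = ∑ u, ∑' t : ℕ, M.P (hitAt M i t0 u ∩ notUp M (i+1) (t0 + t)) :=
            Summable.tsum_finsetSum fun _ _ => ENNReal.summable
        _ ≤ ∑ u, M.P (hitAt M i t0 u) * C := by
            refine Finset.sum_le_sum fun u _ => ?_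
            rw [hC, ← ENNReal.tsum_mul_left]
            exact ENNReal.tsum_le_tsum fun t => key_est hM hedge i t0 t u hi1 him
        _ = (∑ u, M.P (hitAt M i t0 u)) * C := by rw [Finset.sum_mul]
    calc (∑' t0 : ℕ, ∑' t : ℕ, ∑ u, M.P (hitAt M i t0 u ∩ notUp M (i+1) (t0 + t)))
        ≤ ∑' t0 : ℕ, (∑ u, M.P (hitAt M i t0 u)) * C := ENNReal.tsum_le_tsum hstep
      _ = (∑' t0 : ℕ, ∑ u, M.P (hitAt M i t0 u)) * C := ENNReal.tsum_mul_right
      _ ≤ 1 * C := mul_le_mul_left (tsum_hitAt_le_one hM i) C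
      _ = C := one_mul C
      _ ≤ ENNReal.ofReal (1 + 2/M.p + 2/(M.nIslands * M.s i)) := tsum_fterm_le hM i hi1 him
  calc (∑' n : ℕ, M.P (notUp M (i+1) n))
      ≤ ∑' n : ℕ, (M.P (notUp M i n) + ∑ t0 ∈ Finset.range (n+1), ∑ u,
          M.P (hitAt M i t0 u ∩ notUp M (i+1) n)) := ENNReal.tsum_le_tsum hn
    _ = (∑' n : ℕ, M.P (notUp M i n)) + ∑' n : ℕ, ∑ t0 ∈ Finset.range (n+1), ∑ u,
          M.P (hitAt M i t0 u ∩ notUp M (i+1) n) := ENNReal.tsum_add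
    _ ≤ _ := add_le_add le_rfl hinner

lemma notUp_one (hM : M.Valid) (n : ℕ) : notUp M 1 n = ∅ := by
  ext ω
  simp only [notUp, Set.mem_setOf_eq, Set.mem_empty_iff_false, iff_false, not_forall, not_lt]
  exact ⟨⟨0, hM.hμ⟩, (hM.hXrange n ⟨0, hM.hμ⟩ ω).1⟩

lemma levels (hM : M.Valid) (hedge : ∀ u v : Fin M.nIslands, M.edge u v ↔ u ≠ v) :
    ∀ i : ℕ, 1 ≤ i → i ≤ M.m →
    (∑' n : ℕ, M.P (notUp M i n)) ≤
      ∑ k ∈ Finset.Icc 1 (i-1), ENNReal.ofReal (1 + 2/M.p + 2/(M.nIslands * M.s k)) := by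
  intro i
  induction i with
  | zero => intro h; omega
  | succ i ih =>
    intro _ hm
    by_cases hi0 : i = 0
    · subst hi0
      simp [notUp_one hM]
    · have hi1 : 1 ≤ i := by omega
      obtain ⟨j, rfl⟩ : ∃ j, i = j + 1 := ⟨i - 1, by omega⟩
      have hstep := level_step hM hedge (j+1) hi1 hm
      have hih := ih hi1 (by omega)
      have hIcc : Finset.Icc 1 (j + 1 + 1 - 1) = Finset.Icc 1 (j + 1) := by norm_num
      rw [hIcc, Finset.sum_Icc_succ_top (by omega)]
      refine le_trans hstep ?_
      have hIcc2 : Finset.Icc 1 (j + 1 - 1) = Finset.Icc 1 j := by norm_num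
      rw [hIcc2] at hih
      exact add_le_add hih le_rfl

lemma Tpar_le_tsum_indicator (hM : M.Valid) (ω : M.Ω) :
    M.Tpar ω ≤ ∑' n : ℕ, (notUp M M.m n).indicator (fun _ => (1:ℝ≥0∞)) ω := by
  classical
  by_cases h : ∃ t : ℕ, ∃ v, M.X t v ω = M.m
  · set N := Nat.find h with hN
    have hTN : M.Tpar ω ≤ (N : ℝ≥0∞) :=
      iInf_le_of_le N (iInf_le_of_le (Nat.find_spec h) le_rfl)
    refine le_trans hTN ?_
    have hmem : ∀ n, n < N → ω ∈ notUp M M.m n := by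
      intro n hn v
      have hne := Nat.find_min h hn
      push_neg at hne
      have hle := (hM.hXrange n v ω).2
      have := hne v
      omega
    calc (N : ℝ≥0∞)
        = ∑ n ∈ Finset.range N, (notUp M M.m n).indicator (fun _ => (1:ℝ≥0∞)) ω := by
          rw [Finset.sum_congr rfl fun n hn =>
            Set.indicator_of_mem (hmem n (Finset.mem_range.1 hn)) _]
          simp
      _ ≤ _ := ENNReal.sum_le_tsum _
  · push_neg at h
    have hmem : ∀ n, ω ∈ notUp M M.m n := by
      intro n v
      have := h n v
      have hle := (hM.hXrange n v ω).2
      omega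
    have htop : (∑' n : ℕ, (notUp M M.m n).indicator (fun _ => (1:ℝ≥0∞)) ω) = ⊤ := by
      rw [tsum_congr fun n => Set.indicator_of_mem (hmem n) (fun _ => (1:ℝ≥0∞))]
      exact ENNReal.tsum_const_eq_top_of_ne_zero one_ne_zero
    rw [htop]
    exact le_top

end IslandModel

/-- **Fitness levels on the complete topology (Theorem 7 in the paper).** If the migration
topology is the complete graph `K_μ`, then the expected parallel running time is at most
`m + 2m/p + (2/μ) · ∑_{i=1}^{m-1} 1 / s_i`. -/
theorem parallel_EA_complete (M : IslandModel) (hM : M.Valid)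
    (hedge : ∀ u v : Fin M.nIslands, M.edge u v ↔ u ≠ v) :
    ∫⁻ ω, M.Tpar ω ∂M.P ≤
      ENNReal.ofReal ((M.m : ℝ) + 2 * M.m / M.p
        + (2 / M.nIslands) * ∑ i ∈ Finset.Icc 1 (M.m - 1), 1 / M.s i) := by
  classical
  haveI := hM.prob
  have h1 : ∫⁻ ω, M.Tpar ω ∂M.P ≤ ∑' n : ℕ, M.P (IslandModel.notUp M M.m n) := by
    calc ∫⁻ ω, M.Tpar ω ∂M.P
        ≤ ∫⁻ ω, ∑' n : ℕ, (IslandModel.notUp M M.m n).indicator (fun _ => (1:ℝ≥0∞)) ω ∂M.P :=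
          lintegral_mono (IslandModel.Tpar_le_tsum_indicator hM)
      _ = ∑' n : ℕ, ∫⁻ ω, (IslandModel.notUp M M.m n).indicator (fun _ => (1:ℝ≥0∞)) ω ∂M.P :=
          lintegral_tsum fun n =>
            (measurable_const.indicator (IslandModel.notUp_meas hM _ _)).aemeasurable
      _ = ∑' n : ℕ, M.P (IslandModel.notUp M M.m n) :=
          tsum_congr fun n => lintegral_indicator_one (IslandModel.notUp_meas hM _ _)
  have h2 := IslandModel.levels hM hedge M.m hM.hm le_rfl
  refine le_trans (le_trans h1 h2) ?_
  have hp0 := hM.hp0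
  have hμpos : (0:ℝ) < (M.nIslands : ℝ) := by
    have := hM.hμ
    exact_mod_cast Nat.lt_of_lt_of_le Nat.zero_lt_one this
  have hnonneg : ∀ k ∈ Finset.Icc 1 (M.m - 1),
      (0:ℝ) ≤ 1 + 2/M.p + 2/(M.nIslands * M.s k) := by
    intro k hk
    simp only [Finset.mem_Icc] at hk
    obtain ⟨hs0, _⟩ := hM.hs k hk.1 (by omega)
    positivity
  rw [← ENNReal.ofReal_sum_of_nonneg hnonneg]
  apply ENNReal.ofReal_le_ofReal
  -- real arithmetic
  have hcard : (Finset.Icc 1 (M.m - 1)).card = M.m - 1 := by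
    rw [Nat.card_Icc]
    omega
  have hsum : ∑ k ∈ Finset.Icc 1 (M.m - 1), (1 + 2/M.p + 2/((M.nIslands:ℝ) * M.s k))
      = ((M.m - 1 : ℕ) : ℝ) * (1 + 2/M.p)
        + (2/(M.nIslands:ℝ)) * ∑ k ∈ Finset.Icc 1 (M.m - 1), 1 / M.s k := by
    rw [Finset.sum_add_distrib, Finset.sum_const, hcard, nsmul_eq_mul]
    congr 1
    rw [Finset.mul_sum]
    refine Finset.sum_congr rfl fun k _ => ?_
    rw [div_mul_div_comm]
    norm_num
  rw [hsum]
  have hm1 : ((M.m - 1 : ℕ) : ℝ) = (M.m : ℝ) - 1 := by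
    have := hM.hm
    push_cast [Nat.cast_sub this]
    ring
  rw [hm1]
  have h2p : (0:ℝ) ≤ 2 / M.p := by positivity
  have hmle : ((M.m : ℝ) - 1) * (2 / M.p) ≤ (M.m : ℝ) * (2 / M.p) := by
    apply mul_le_mul_of_nonneg_right _ h2p
    linarith
  have hid : (M.m : ℝ) * (2 / M.p) = 2 * M.m / M.p := by ring
  nlinarith [hmle]
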